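/- Let V be a complex vector space of dimension 2m with m ≥ 2 and let j ∈ End(V) satisfy j∘j = −Id, with each of the eigenspaces ker(j − i·Id) and ker(j + i·Id) of dimension m. Then there exists a nonzero Bianchi tensor R on V satisfying D_j R = 4i·R, where (D_j R)(X,Y)Z = j(R(X,Y)Z) − R(jX,Y)Z − R(X,jY)Z − R(X,Y)(jZ); moreover every such R has vanishing Ricci contraction. (Thus the 4i-eigenvalue of D_j occurs on the space of Weyl tensors.) -/

import Mathlib

open LinearMap Module

/-- The derivation action `D_j` of `j` on `End(V)`-valued bilinear maps:
`(D_j R)(X,Y)Z = j(R(X,Y)Z) − R(jX,Y)Z − R(X,jY)Z − R(X,Y)(jZ)`. -/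
noncomputable def DjTri {V : Type*} [AddCommGroup V] [Module ℂ V]
    (j : Module.End ℂ V) (R : V →ₗ[ℂ] V →ₗ[ℂ] Module.End ℂ V) :
    V →ₗ[ℂ] V →ₗ[ℂ] Module.End ℂ V :=
  R.compr₂ (LinearMap.llcomp ℂ V V V j)
    - R.compl₁₂ j LinearMap.id - R.compl₁₂ LinearMap.id j
    - R.compr₂ (LinearMap.lcomp ℂ V j)

/-- The Ricci contraction of a curvature-type tensor `R : V × V → End(V)` is the bilinear
form `r(X,Y) = Tr(Z ↦ R(X,Z)Y)`. -/
noncomputable def ricci {V : Type*} [AddCommGroup V] [Module ℂ V]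
    (R : V →ₗ[ℂ] V →ₗ[ℂ] Module.End ℂ V) (X Y : V) : ℂ :=
  LinearMap.trace ℂ V ((LinearMap.applyₗ Y).comp (R X))

/-- Let `dim V = 2m`, `m ≥ 2`, and `j² = −Id` with both eigenspaces `ker(j ∓ i·Id)` of
dimension `m`. Then there is a nonzero Bianchi tensor `R` with `D_j R = 4i·R`, and every
such `R` has vanishing Ricci contraction: the `4i`-eigenvalue of `D_j` occurs on the
space of Weyl tensors. -/
theorem weyl_four_i_eigenvalue {V : Type*} [AddCommGroup V] [Module ℂ V]
    [FiniteDimensional ℂ V]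
    (m : ℕ) (hm : 2 ≤ m) (hdim : Module.finrank ℂ V = 2 * m)
    (j : Module.End ℂ V) (hj : j * j = -1)
    (hplus : Module.finrank ℂ (LinearMap.ker (j - Complex.I • LinearMap.id)) = m)
    (hminus : Module.finrank ℂ (LinearMap.ker (j + Complex.I • LinearMap.id)) = m) :
    (∃ R : V →ₗ[ℂ] V →ₗ[ℂ] Module.End ℂ V,
        R ≠ 0 ∧
        (∀ X : V, R X X = 0) ∧
        (∀ X Y Z : V, R X Y Z + R Y Z X + R Z X Y = 0) ∧
        DjTri j R = (4 * Complex.I) • R) ∧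
    (∀ R : V →ₗ[ℂ] V →ₗ[ℂ] Module.End ℂ V,
        (∀ X : V, R X X = 0) →
        (∀ X Y Z : V, R X Y Z + R Y Z X + R Z X Y = 0) →
        DjTri j R = (4 * Complex.I) • R →
        ∀ X Y : V, ricci R X Y = 0) := by
  classical
  have hjj : ∀ v : V, j (j v) = -v := by
    intro v
    have h := congrArg (fun f : Module.End ℂ V => f v) hj
    simpa using h
  have hDj : ∀ (R : V →ₗ[ℂ] V →ₗ[ℂ] Module.End ℂ V) (X Y Z : V),
      DjTri j R X Y Z = j (R X Y Z) - R (j X) Y Z - R X (j Y) Z - R X Y (j Z) := by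
    intro R X Y Z
    simp [DjTri]
  constructor
  · -- Existence of a nonzero Bianchi tensor in the 4i-eigenspace
    -- bases of the eigenspaces
    set Km := LinearMap.ker (j + Complex.I • LinearMap.id) with hKm
    set Kp := LinearMap.ker (j - Complex.I • LinearMap.id) with hKp
    let b : Basis (Fin m) ℂ Km := (Module.finBasis ℂ Km).reindex (finCongr hminus)
    let c : Basis (Fin m) ℂ Kp := (Module.finBasis ℂ Kp).reindex (finCongr hplus)
    have h0m : 0 < m := by omega
    let i0 : Fin m := ⟨0, by omega⟩
    let i1 : Fin m := ⟨1, by omega⟩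
    have hne : i0 ≠ i1 := by
      simp [i0, i1, Fin.ext_iff]
    -- the projection onto Km
    set P : Module.End ℂ V := ((2:ℂ)⁻¹) • (1 + Complex.I • j) with hP
    have hPapp : ∀ v : V, P v = (2:ℂ)⁻¹ • (v + Complex.I • j v) := by
      intro v; simp [hP]
    have hPmem : ∀ v : V, P v ∈ Km := by
      intro v
      rw [hKm, LinearMap.mem_ker]
      simp only [LinearMap.add_apply, LinearMap.smul_apply, LinearMap.id_apply]
      rw [hPapp]
      simp only [map_smul, map_add, hjj, smul_add, smul_neg, smul_smul,
        Complex.I_mul_I]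
      match_scalars <;> (ring_nf; try norm_num [Complex.I_sq])
    have hPfix : ∀ v : V, v ∈ Km → P v = v := by
      intro v hv
      rw [hKm, LinearMap.mem_ker] at hv
      simp only [LinearMap.add_apply, LinearMap.smul_apply, LinearMap.id_apply] at hv
      have hjv : j v = -(Complex.I • v) := by
        have := hv
        linear_combination (norm := module) this
      rw [hPapp, hjv]
      simp only [smul_neg, smul_smul, Complex.I_mul_I]
      match_scalars <;> (ring_nf; try norm_num [Complex.I_sq])
    have hPj : ∀ v : V, P (j v) = -(Complex.I • P v) := by
      intro v
      rw [hPapp, hPapp]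
      simp only [hjj, smul_add, smul_neg, smul_smul, Complex.I_mul_I, neg_smul]
      match_scalars <;> (ring_nf; try norm_num [Complex.I_sq])
    let p : V →ₗ[ℂ] Km := LinearMap.codRestrict Km P hPmem
    have hpapp : ∀ v : V, (p v : V) = P v := fun v => rfl
    let φ : Fin m → (V →ₗ[ℂ] ℂ) := fun i => (b.coord i) ∘ₗ p
    have hφj : ∀ (i : Fin m) (X : V), φ i (j X) = -(Complex.I * φ i X) := by
      intro i X
      have hpj : p (j X) = -(Complex.I • p X) := by
        apply Subtype.ext
        show P (j X) = -(Complex.I • P X)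
        exact hPj X
      simp only [φ, LinearMap.comp_apply, hpj, map_neg, map_smul, smul_eq_mul]
    have hφb : ∀ i k : Fin m, φ i ((b k : V)) = if k = i then 1 else 0 := by
      intro i k
      have hpb : p ((b k : V)) = b k := by
        apply Subtype.ext
        show P ((b k : V)) = (b k : V)
        exact hPfix _ (b k).2
      simp only [φ, LinearMap.comp_apply, hpb, Basis.coord_apply, Basis.repr_self,
        Finsupp.single_apply]
    set u₁ : V := (b i0 : V) with hu₁
    set u₂ : V := (b i1 : V) with hu₂
    set w : V := (c i0 : V) with hwdef
    have hw0 : w ≠ 0 := by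
      simp only [hwdef, ne_eq, ZeroMemClass.coe_eq_zero]
      exact c.ne_zero i0
    have hwj : j w = Complex.I • w := by
      have hv : (j - Complex.I • (LinearMap.id : V →ₗ[ℂ] V)) w = 0 := (c i0).2
      simp only [LinearMap.sub_apply, LinearMap.smul_apply, LinearMap.id_apply] at hv
      linear_combination (norm := module) hv
    set φ₁ : V →ₗ[ℂ] ℂ := φ i0 with hφ₁
    set φ₂ : V →ₗ[ℂ] ℂ := φ i1 with hφ₂
    have h11 : φ₁ u₁ = 1 := by rw [hφ₁, hu₁, hφb]; simp
    have h12 : φ₁ u₂ = 0 := by rw [hφ₁, hu₂, hφb]; simp [hne.symm]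
    have h21 : φ₂ u₁ = 0 := by rw [hφ₂, hu₁, hφb]; simp [hne]
    have h22 : φ₂ u₂ = 1 := by rw [hφ₂, hu₂, hφb]; simp
    set E : Module.End ℂ V := φ₁.smulRight w with hE
    let R₀ : V →ₗ[ℂ] V →ₗ[ℂ] Module.End ℂ V :=
      LinearMap.mk₂ ℂ (fun X Y => (φ₁ X * φ₂ Y - φ₂ X * φ₁ Y) • E)
        (by intro X X' Y; simp only [map_add]; match_scalars; ring)
        (by intro a X Y; simp only [map_smul, smul_eq_mul]; match_scalars; ring)
        (by intro X Y Y'; simp only [map_add]; match_scalars; ring)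
        (by intro a X Y; simp only [map_smul, smul_eq_mul]; match_scalars; ring)
    have hR₀ : ∀ X Y Z : V, R₀ X Y Z = ((φ₁ X * φ₂ Y - φ₂ X * φ₁ Y) * φ₁ Z) • w := by
      intro X Y Z
      simp [R₀, hE, LinearMap.smulRight_apply, smul_smul]
    refine ⟨R₀, ?_, ?_, ?_, ?_⟩
    · intro h
      have h1 : R₀ u₁ u₂ u₁ = 0 := by rw [h]; simp
      rw [hR₀, h11, h12, h21, h22] at h1
      simp at h1
      exact hw0 h1
    · intro X
      apply LinearMap.ext
      intro Z
      rw [hR₀]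
      have hc : φ₁ X * φ₂ X - φ₂ X * φ₁ X = 0 := by ring
      rw [hc, zero_mul, zero_smul]
      rfl
    · intro X Y Z
      rw [hR₀, hR₀, hR₀, ← add_smul, ← add_smul]
      have hc : (φ₁ X * φ₂ Y - φ₂ X * φ₁ Y) * φ₁ Z
          + (φ₁ Y * φ₂ Z - φ₂ Y * φ₁ Z) * φ₁ X
          + (φ₁ Z * φ₂ X - φ₂ Z * φ₁ X) * φ₁ Y = 0 := by ring
      rw [hc, zero_smul]
    · apply LinearMap.ext; intro X
      apply LinearMap.ext; intro Y
      apply LinearMap.ext; intro Z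
      rw [hDj]
      simp only [hR₀, map_smul, hwj, hφ₁, hφ₂, hφj, LinearMap.smul_apply]
      match_scalars
      ring
  · -- vanishing of the Ricci contraction
    intro R _ _ hD X Y
    have star : ∀ X Y : V,
        -(ricci R (j X) Y) - ricci R X (j Y) = (4 * Complex.I) * ricci R X Y := by
      intro X Y
      have hop : j ∘ₗ ((LinearMap.applyₗ Y) ∘ₗ (R X))
          - (LinearMap.applyₗ Y) ∘ₗ (R (j X))
          - ((LinearMap.applyₗ Y) ∘ₗ (R X)) ∘ₗ j
          - (LinearMap.applyₗ (j Y)) ∘ₗ (R X)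
          = (4 * Complex.I) • ((LinearMap.applyₗ Y) ∘ₗ (R X)) := by
        ext Z
        have h1 := congrArg (fun T : V →ₗ[ℂ] V →ₗ[ℂ] Module.End ℂ V => T X Z Y) hD
        rw [hDj] at h1
        simpa using h1
      have htr := congrArg (LinearMap.trace ℂ V) hop
      simp only [map_sub, map_smul] at htr
      rw [show j ∘ₗ ((LinearMap.applyₗ Y) ∘ₗ (R X))
            = j * ((LinearMap.applyₗ Y) ∘ₗ (R X)) from rfl,
          show ((LinearMap.applyₗ Y) ∘ₗ (R X)) ∘ₗ j
            = ((LinearMap.applyₗ Y) ∘ₗ (R X)) * j from rfl,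
          LinearMap.trace_mul_comm] at htr
      simp only [smul_eq_mul] at htr
      show -(ricci R (j X) Y) - ricci R X (j Y) = (4 * Complex.I) * ricci R X Y
      simp only [ricci]
      linear_combination htr
    have hneg1 : ∀ X Y : V, ricci R (-X) Y = -(ricci R X Y) := by
      intro X Y; simp [ricci]
    have hneg2 : ∀ X Y : V, ricci R X (-Y) = -(ricci R X Y) := by
      intro X Y; simp [ricci, map_neg]
    have e1 := star X Y
    have e2 := star (j X) Y
    have e3 := star X (j Y)
    have e4 := star (j X) (j Y)
    rw [hjj X, hneg1] at e2
    rw [hjj Y, hneg2] at e3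
    rw [hjj X, hjj Y, hneg1, hneg2] at e4
    have h4I : (4 * Complex.I : ℂ) ≠ 0 := by
      simp [Complex.I_ne_zero]
    have hbc : ricci R (j X) Y = ricci R X (j Y) :=
      mul_left_cancel₀ h4I (by linear_combination e3 - e2)
    have hd : ricci R (j X) (j Y) = -(ricci R X Y) :=
      mul_left_cancel₀ h4I (by linear_combination -e4 - e1)
    linear_combination (-1/6 : ℂ) * e2 + (-1/6 : ℂ) * hd + (Complex.I/3) * e1
      + (-(Complex.I)/3) * hbc + ((4/3) * ricci R X Y) * Complex.I_sq
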